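/- Let φ be a fundamental function with δ(φ) > 0. Then for every ε > 0 and every positive integer m there exists a fundamental function ψ equivalent to φ such that δ_ψ(m) > 1/(1+ε). -/

import Mathlib

open scoped BigOperators

section CommonDefs

variable {X : Type*} [NormedAddCommGroup X] [NormedSpace ℝ X]

/-- `(e, coord)` is a Schauder basis of `X` with biorthogonal functionals `coord`:
the functionals are biorthogonal to the basis vectors and every `x` is the limit of the
partial sums of its expansion `Σ coord i x • e i`. -/
structure IsSchauderBasis (e : ℕ → X) (coord : ℕ → X →L[ℝ] ℝ) : Prop where
  biorth : ∀ i j, coord i (e j) = if i = j then 1 else 0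
  expansion : ∀ x : X,
    Filter.Tendsto (fun n => ∑ i ∈ Finset.range n, coord i x • e i)
      Filter.atTop (nhds x)

/-- The best `m`-term approximation error `σ_m(x)` w.r.t. the norm `nn`. -/
noncomputable def bestApprox (e : ℕ → X) (nn : X → ℝ) (m : ℕ) (x : X) : ℝ :=
  sInf { r | ∃ (A : Finset ℕ) (a : ℕ → ℝ), A.card ≤ m ∧
    r = nn (x - ∑ i ∈ A, a i • e i) }

/-- `A` is a set of coordinates of `x` of largest modulus (a greedy set):
the `m`-th greedy approximant of `x` is `∑ i ∈ A, coord i x • e i` for a greedy set of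
cardinality `m`. -/
def GreedySet (coord : ℕ → X →L[ℝ] ℝ) (x : X) (A : Finset ℕ) : Prop :=
  ∀ i ∈ A, ∀ j ∉ A, |coord j x| ≤ |coord i x|

/-- The basis `(e, coord)` is `C`-greedy w.r.t. the norm `nn`:
`‖x - G_m(x)‖ ≤ C σ_m(x)` for every `x` and `m` (for any choice of `m`-th greedy
approximant `G_m(x)`). -/
def IsGreedyWith (e : ℕ → X) (coord : ℕ → X →L[ℝ] ℝ) (nn : X → ℝ) (C : ℝ) : Prop :=
  ∀ (x : X) (m : ℕ) (A : Finset ℕ), A.card = m → GreedySet coord x A →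
    nn (x - ∑ i ∈ A, coord i x • e i) ≤ C * bestApprox e nn m x

/-- Suppression `K`-unconditionality w.r.t. the norm `nn`. -/
def IsSuppressionUnconditionalWith (e : ℕ → X) (nn : X → ℝ) (K : ℝ) : Prop :=
  ∀ (s A : Finset ℕ) (a : ℕ → ℝ), A ⊆ s →
    nn (∑ i ∈ A, a i • e i) ≤ K * nn (∑ i ∈ s, a i • e i)

/-- `K`-unconditionality w.r.t. the norm `nn`. -/
def IsUnconditionalWith (e : ℕ → X) (nn : X → ℝ) (K : ℝ) : Prop :=
  ∀ (s : Finset ℕ) (a b : ℕ → ℝ), (∀ i, |a i| ≤ |b i|) →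
    nn (∑ i ∈ s, a i • e i) ≤ K * nn (∑ i ∈ s, b i • e i)

/-- `Δ`-democracy w.r.t. the norm `nn`. -/
def IsDemocraticWith (e : ℕ → X) (nn : X → ℝ) (Δ : ℝ) : Prop :=
  ∀ A B : Finset ℕ, A.card ≤ B.card →
    nn (∑ i ∈ A, e i) ≤ Δ * nn (∑ i ∈ B, e i)

/-- The basis is normalized w.r.t. the norm `nn`. -/
def IsNormalizedWith (e : ℕ → X) (nn : X → ℝ) : Prop :=
  ∀ i, nn (e i) = 1

/-- The basis is seminormalized. -/
def IsSeminormalized (e : ℕ → X) : Prop :=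
  ∃ c C : ℝ, 0 < c ∧ ∀ i, c ≤ ‖e i‖ ∧ ‖e i‖ ≤ C

/-- The fundamental function `φ(n) = sup_{|A| ≤ n} ‖Σ_{i∈A} e_i‖` w.r.t. the norm `nn`. -/
noncomputable def fundFn (e : ℕ → X) (nn : X → ℝ) (n : ℕ) : ℝ :=
  sSup { r | ∃ A : Finset ℕ, A.card ≤ n ∧ r = nn (∑ i ∈ A, e i) }

/-- The dual norm (w.r.t. `nn`) of `∑_{i∈A} e_i^*`. -/
noncomputable def dualNormFinset (coord : ℕ → X →L[ℝ] ℝ) (nn : X → ℝ) (A : Finset ℕ) : ℝ :=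
  sSup { r | ∃ x : X, nn x ≤ 1 ∧ r = |∑ i ∈ A, coord i x| }

/-- The dual fundamental function `φ*(n) = sup_{|A| ≤ n} ‖Σ_{i∈A} e_i^*‖*` w.r.t. `nn`. -/
noncomputable def dualFundFn (coord : ℕ → X →L[ℝ] ℝ) (nn : X → ℝ) (n : ℕ) : ℝ :=
  sSup { r | ∃ A : Finset ℕ, A.card ≤ n ∧ r = dualNormFinset coord nn A }

/-- `Δ`-bidemocracy w.r.t. the norm `nn`: `φ(n) φ*(n) ≤ Δ n` for all `n`. -/
def IsBidemocraticWith (e : ℕ → X) (coord : ℕ → X →L[ℝ] ℝ) (nn : X → ℝ) (Δ : ℝ) : Prop :=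
  ∀ n : ℕ, fundFn e nn n * dualFundFn coord nn n ≤ Δ * n

/-- `nn` is a norm on `X` equivalent to the original norm. -/
def IsEquivNorm (nn : X → ℝ) : Prop :=
  (∀ x y : X, nn (x + y) ≤ nn x + nn y) ∧
  (∀ (a : ℝ) (x : X), nn (a • x) = |a| * nn x) ∧
  ∃ c C : ℝ, 0 < c ∧ ∀ x : X, c * ‖x‖ ≤ nn x ∧ nn x ≤ C * ‖x‖

/-- The (finitely supported) vector `Σ_i f i • e i` with coefficients `f ∈ c₀₀`. -/
noncomputable def finVec (e : ℕ → X) (f : ℕ →₀ ℝ) : X :=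
  f.sum fun i c => c • e i

/-- `y = w + t` is a greedy rearrangement of `x = w + u`: the coefficient sequences
`w, u, t` have pairwise disjoint supports, `|supp u| = |supp t|`, and
`‖w‖_∞ ≤ |u_i| = |t_j|` for all `i ∈ supp u`, `j ∈ supp t`. -/
def IsGreedyRearrangement (w u t : ℕ →₀ ℝ) : Prop :=
  Disjoint w.support u.support ∧ Disjoint w.support t.support ∧
  Disjoint u.support t.support ∧ u.support.card = t.support.card ∧
  (∀ i ∈ u.support, ∀ j ∈ t.support, |u i| = |t j|) ∧
  (∀ n : ℕ, ∀ i ∈ u.support, |w n| ≤ |u i|)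

end CommonDefs

section FundDefs

/-- A fundamental (quasi-concave) function on `[1, ∞)`: positive, increasing, and
`x ↦ φ(x)/x` is decreasing. -/
def IsFundamentalFunction (φ : ℝ → ℝ) : Prop :=
  (∀ x : ℝ, 1 ≤ x → 0 < φ x) ∧
  (∀ x y : ℝ, 1 ≤ x → x ≤ y → φ x ≤ φ y) ∧
  (∀ x y : ℝ, 1 ≤ x → x ≤ y → φ y / y ≤ φ x / x)

/-- `δ_φ(y) = liminf_{x→∞} φ(yx)/(y φ(x))`. -/
noncomputable def deltaFn (φ : ℝ → ℝ) (y : ℝ) : ℝ :=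
  Filter.liminf (fun x : ℝ => φ (y * x) / (y * φ x)) Filter.atTop

/-- `δ(φ) = inf_{y ≥ 1} δ_φ(y)`. -/
noncomputable def deltaParam (φ : ℝ → ℝ) : ℝ :=
  sInf { d | ∃ y : ℝ, 1 ≤ y ∧ d = deltaFn φ y }

/-- Equivalence of fundamental functions. -/
def FundEquiv (φ ψ : ℝ → ℝ) : Prop :=
  ∃ a b : ℝ, 0 < a ∧ 0 < b ∧ ∀ x : ℝ, 1 ≤ x → a * φ x ≤ ψ x ∧ ψ x ≤ b * φ x

end FundDefs

set_option maxHeartbeats 2000000 in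
/-- if `φ` is a fundamental function with `δ(φ) > 0`, then for every
`ε > 0` and every positive integer `m` there is a fundamental function `ψ` equivalent to
`φ` with `δ_ψ(m) > 1/(1+ε)`. -/
theorem exists_equiv_fundamentalFunction_large_delta (φ : ℝ → ℝ)
    (hφ : IsFundamentalFunction φ) (hδ : 0 < deltaParam φ)
    (ε : ℝ) (hε : 0 < ε) (m : ℕ) (hm : 1 ≤ m) :
    ∃ ψ : ℝ → ℝ, IsFundamentalFunction ψ ∧ FundEquiv φ ψ ∧
      1 / (1 + ε) < deltaFn ψ (m : ℝ) := by
  obtain ⟨hpos, hmono, hdec⟩ := hφ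
  -- the set defining deltaParam is bounded below
  have hbdd : BddBelow { d | ∃ y : ℝ, 1 ≤ y ∧ d = deltaFn φ y } := by
    by_contra h
    rw [deltaParam, Real.sInf_of_not_bddBelow h] at hδ
    exact lt_irrefl 0 hδ
  have hδy : ∀ y : ℝ, 1 ≤ y → deltaParam φ ≤ deltaFn φ y := fun y hy =>
    csInf_le hbdd ⟨y, hy, rfl⟩
  have hδ1 : deltaParam φ ≤ 1 := by
    have h1 : deltaFn φ 1 = 1 := by
      have hcg : (fun x : ℝ => φ (1 * x) / (1 * φ x)) =ᶠ[Filter.atTop] fun _ => (1:ℝ) := by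
        filter_upwards [Filter.eventually_ge_atTop (1:ℝ)] with x hx
        simp [one_mul, div_self (ne_of_gt (hpos x hx))]
      rw [deltaFn, Filter.liminf_congr hcg, Filter.liminf_const]
    simpa [h1] using hδy 1 le_rfl
  set c : ℝ := deltaParam φ / 2 with hc
  have hc0 : 0 < c := by positivity
  have hcδ : c < deltaParam φ := by simp only [hc]; linarith
  have hc1 : c ≤ 1 := by simp only [hc]; linarith
  clear_value c
  obtain ⟨k, hk⟩ := exists_nat_gt (((1 - c) * (1 + ε) / ε) / c)
  have hM : (1:ℝ) ≤ (m:ℝ) := by exact_mod_cast hm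
  have hMj : ∀ j : ℕ, (1:ℝ) ≤ (m:ℝ) ^ j := fun j => one_le_pow₀ hM
  have hMjpos : ∀ j : ℕ, (0:ℝ) < (m:ℝ) ^ j := fun j => lt_of_lt_of_le one_pos (hMj j)
  have hx1 : ∀ x : ℝ, 1 ≤ x → ∀ j : ℕ, (1:ℝ) ≤ (m:ℝ) ^ j * x := by
    intro x hx j
    calc (1:ℝ) = 1 * 1 := by ring
    _ ≤ (m:ℝ) ^ j * x := mul_le_mul (hMj j) hx zero_le_one (le_trans zero_le_one (hMj j))
  set ψ : ℝ → ℝ := fun x => ∑ j ∈ Finset.range (k+1), φ ((m:ℝ) ^ j * x) / (m:ℝ) ^ j with hψ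
  -- basic facts about ψ
  have hψpos : ∀ x : ℝ, 1 ≤ x → 0 < ψ x := by
    intro x hx
    refine Finset.sum_pos (fun j _ => div_pos (hpos _ (hx1 x hx j)) (hMjpos j)) ?_
    exact Finset.nonempty_range_iff.2 (Nat.succ_ne_zero k)
  have hψmono : ∀ x y : ℝ, 1 ≤ x → x ≤ y → ψ x ≤ ψ y := by
    intro x y hx hxy
    refine Finset.sum_le_sum fun j _ => ?_
    have := hmono ((m:ℝ)^j * x) ((m:ℝ)^j * y) (hx1 x hx j)
      (mul_le_mul_of_nonneg_left hxy (le_of_lt (hMjpos j)))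
    exact div_le_div_of_nonneg_right this (hMjpos j).le
  have hψdec : ∀ x y : ℝ, 1 ≤ x → x ≤ y → ψ y / y ≤ ψ x / x := by
    intro x y hx hxy
    simp only [hψ]
    rw [Finset.sum_div, Finset.sum_div]
    refine Finset.sum_le_sum fun j _ => ?_
    have := hdec ((m:ℝ)^j * x) ((m:ℝ)^j * y) (hx1 x hx j)
      (mul_le_mul_of_nonneg_left hxy (le_of_lt (hMjpos j)))
    rw [div_div, div_div]
    exact this
  have hψfund : IsFundamentalFunction ψ := ⟨hψpos, hψmono, hψdec⟩
  -- each term is at most φ x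
  have hterm_le : ∀ x : ℝ, 1 ≤ x → ∀ j : ℕ, φ ((m:ℝ)^j * x) / (m:ℝ)^j ≤ φ x := by
    intro x hx j
    have hx0 : (0:ℝ) < x := lt_of_lt_of_le one_pos hx
    have h2 := hdec x ((m:ℝ)^j * x) hx (le_mul_of_one_le_left (le_of_lt hx0) (hMj j))
    rw [div_le_div_iff₀ (by positivity) hx0] at h2
    rw [div_le_iff₀ (hMjpos j)]
    nlinarith [hMjpos j, hx0]
  have hequiv : FundEquiv φ ψ := by
    refine ⟨1, (k+1 : ℕ), one_pos, by positivity, fun x hx => ⟨?_, ?_⟩⟩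
    · rw [one_mul]
      have h0 : φ x = φ ((m:ℝ)^0 * x) / (m:ℝ)^0 := by simp
      rw [h0]
      exact Finset.single_le_sum
        (f := fun j => φ ((m:ℝ)^j * x) / (m:ℝ)^j)
        (fun j _ => le_of_lt (div_pos (hpos _ (hx1 x hx j)) (hMjpos j)))
        (Finset.mem_range.2 (Nat.succ_pos k))
    · calc ψ x ≤ ∑ _j ∈ Finset.range (k+1), φ x :=
            Finset.sum_le_sum fun j _ => hterm_le x hx j
        _ = ((k+1 : ℕ) : ℝ) * φ x := by
            rw [Finset.sum_const, Finset.card_range, nsmul_eq_mul]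
  -- eventual lower bounds on the ratios
  have hev : ∀ j : ℕ, 1 ≤ j →
      ∀ᶠ x : ℝ in Filter.atTop, c < φ ((m:ℝ)^j * x) / ((m:ℝ)^j * φ x) := by
    intro j _
    have h1 : c < deltaFn φ ((m:ℝ)^j) := lt_of_lt_of_le hcδ (hδy _ (hMj j))
    have hb : Filter.IsBoundedUnder (· ≥ ·) Filter.atTop
        (fun x : ℝ => φ ((m:ℝ)^j * x) / ((m:ℝ)^j * φ x)) := by
      refine ⟨0, Filter.eventually_map.2 ?_⟩
      filter_upwards [Filter.eventually_ge_atTop (1:ℝ)] with x hx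
      have := hpos _ (hx1 x hx j)
      have := hpos x hx
      positivity
    exact Filter.eventually_lt_of_lt_liminf h1 hb
  have hall : ∀ᶠ x : ℝ in Filter.atTop, 1 ≤ x ∧
      ∀ j ∈ Finset.Icc 1 (k+1), c < φ ((m:ℝ)^j * x) / ((m:ℝ)^j * φ x) := by
    refine (Filter.eventually_ge_atTop (1:ℝ)).and ?_
    rw [Filter.eventually_all_finset]
    intro j hj
    exact hev j (Finset.mem_Icc.1 hj).1
  set C : ℝ := 1 - (1 - c) / (1 + k * c) with hC
  clear_value C
  have h1kc : (0:ℝ) < 1 + k * c := by positivity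
  -- eventual lower bound on the ψ-ratio
  have hkey : ∀ᶠ x : ℝ in Filter.atTop, C ≤ ψ ((m:ℝ) * x) / ((m:ℝ) * ψ x) := by
    filter_upwards [hall] with x hx'
    obtain ⟨hx, hj⟩ := hx'
    have hx0 : (0:ℝ) < x := lt_of_lt_of_le one_pos hx
    have hφx : (0:ℝ) < φ x := hpos x hx
    have hψx : (0:ℝ) < ψ x := hψpos x hx
    have hprod : ∀ j ∈ Finset.Icc 1 (k+1), c * ((m:ℝ)^j * φ x) ≤ φ ((m:ℝ)^j * x) := by
      intro j hjm
      have h2 := hj j hjm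
      rw [lt_div_iff₀ (by positivity)] at h2
      linarith
    -- lower bound on ψ x
    have hlow : (1 + k * c) * φ x ≤ ψ x := by
      have termbound : ∀ j ∈ Finset.range (k+1),
          (if j = 0 then φ x else c * φ x) ≤ φ ((m:ℝ)^j * x) / (m:ℝ)^j := by
        intro j hjr
        by_cases h0 : j = 0
        · simp [h0]
        · simp only [if_neg h0]
          have hj1 : j ∈ Finset.Icc 1 (k+1) :=
            Finset.mem_Icc.2 ⟨Nat.one_le_iff_ne_zero.2 h0,
              le_of_lt (Finset.mem_range.1 hjr)⟩
          have h3 := hprod j hj1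
          rw [le_div_iff₀ (hMjpos j)]
          nlinarith [hMjpos j]
      have hsum := Finset.sum_le_sum termbound
      have hval : ∑ j ∈ Finset.range (k+1), (if j = 0 then φ x else c * φ x)
          = φ x + k * (c * φ x) := by
        rw [Finset.sum_range_succ']
        simp [Finset.sum_const, Finset.card_range]
        ring
      rw [hval] at hsum
      nlinarith [hsum]
    -- identity for ψ (m x)
    have hm0 : ((m:ℝ)) ≠ 0 := by positivity
    have hid : ψ ((m:ℝ) * x)
        = (m:ℝ) * (ψ x - φ x + φ ((m:ℝ)^(k+1) * x) / (m:ℝ)^(k+1)) := by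
      have h1 : ψ ((m:ℝ) * x)
          = ∑ j ∈ Finset.range (k+1), (m:ℝ) * (φ ((m:ℝ)^(j+1) * x) / (m:ℝ)^(j+1)) := by
        refine Finset.sum_congr rfl fun j _ => ?_
        have harg : (m:ℝ)^j * ((m:ℝ) * x) = (m:ℝ)^(j+1) * x := by ring
        rw [harg, pow_succ]
        field_simp
      rw [h1, ← Finset.mul_sum]
      congr 1
      have h2 := Finset.sum_range_succ' (fun j => φ ((m:ℝ)^j * x) / (m:ℝ)^j) (k+1)
      have h3 := Finset.sum_range_succ (fun j => φ ((m:ℝ)^j * x) / (m:ℝ)^j) (k+1)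
      simp only [pow_zero, one_mul, div_one] at h2
      simp only [hψ]
      linarith [h2, h3]
    -- conclude
    have hg : c * φ x ≤ φ ((m:ℝ)^(k+1) * x) / (m:ℝ)^(k+1) := by
      have h3 := hprod (k+1) (Finset.mem_Icc.2 ⟨Nat.le_add_left 1 k, le_refl _⟩)
      rw [le_div_iff₀ (hMjpos (k+1))]
      nlinarith [hMjpos (k+1)]
    have hfrac : (1 - c) * φ x ≤ (1 - c) / (1 + k * c) * ψ x := by
      rw [div_mul_eq_mul_div, le_div_iff₀ h1kc]
      nlinarith [hlow, hc1]
    have hcore : C * ψ x ≤ ψ x - φ x + φ ((m:ℝ)^(k+1) * x) / (m:ℝ)^(k+1) := by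
      have : C * ψ x = ψ x - (1 - c) / (1 + k * c) * ψ x := by rw [hC]; ring
      rw [this]
      linarith [hfrac, hg]
    rw [le_div_iff₀ (by positivity)]
    rw [hid]
    nlinarith [hcore, hM]
  -- liminf bound
  have hcob : Filter.IsCoboundedUnder (· ≥ ·) Filter.atTop
      (fun x : ℝ => ψ ((m:ℝ) * x) / ((m:ℝ) * ψ x)) := by
    refine Filter.isCoboundedUnder_ge_of_eventually_le Filter.atTop (x := 1) ?_
    filter_upwards [Filter.eventually_ge_atTop (1:ℝ)] with x hx
    have hx0 : (0:ℝ) < x := lt_of_lt_of_le one_pos hx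
    have hψx : (0:ℝ) < ψ x := hψpos x hx
    have h4 := hψdec x ((m:ℝ) * x) hx (le_mul_of_one_le_left (le_of_lt hx0) hM)
    rw [div_le_div_iff₀ (by positivity) hx0] at h4
    rw [div_le_one (by positivity)]
    have heq : ψ x * ((m:ℝ) * x) = (m:ℝ) * ψ x * x := by ring
    exact le_of_mul_le_mul_right (by linarith [h4, heq]) hx0
  have hlim : C ≤ deltaFn ψ (m:ℝ) := Filter.le_liminf_of_le hcob hkey
  -- numeric bound on C
  have hCε : 1 / (1 + ε) < C := by
    have hε1 : (0:ℝ) < 1 + ε := by linarith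
    have hk' : (1 - c) * (1 + ε) / ε < k * c := by
      rw [div_lt_iff₀ hc0] at hk
      linarith
    have hfr : (1 - c) / (1 + k * c) < ε / (1 + ε) := by
      rw [div_lt_div_iff₀ h1kc hε1]
      have h5 : (1 - c) * (1 + ε) < ε * (k * c) := by
        rw [div_lt_iff₀ hε] at hk'
        linarith
      nlinarith [hε]
    have h6 : 1 / (1 + ε) = 1 - ε / (1 + ε) := by field_simp; ring
    rw [h6, hC]
    linarith
  exact ⟨ψ, hψfund, hequiv, lt_of_lt_of_le hCε hlim⟩
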